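/- Dissipativity identity of the upwind advection operator (established in the proof of Lemma B.7): for every φ : (ZMod N_x) × (ZMod N_y) → ℝ^{N_q}, Σ_{(i,j)} Σ_ℓ w_ℓ φ(i,j)_ℓ (ℒ_x φ)(i,j)_ℓ · ΔxΔy = (Δx/2) Σ_{(i,j)} Σ_ℓ w_ℓ |Ω_ℓ| ((D⁺_x φ)(i,j)_ℓ)² · ΔxΔy. -/
import Mathlib


open Finset

private lemma shift_sum {Nx Ny : ℕ} [NeZero Nx] [NeZero Ny]
    (f : ZMod Nx × ZMod Ny → ℝ) :
    ∑ p : ZMod Nx × ZMod Ny, f (p.1 + 1, p.2) = ∑ p : ZMod Nx × ZMod Ny, f p := by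
  apply Fintype.sum_equiv ((Equiv.addRight (1 : ZMod Nx)).prodCongr (Equiv.refl (ZMod Ny)))
  intro p
  rfl

/-- Dissipativity identity of the upwind advection operator
(established in the proof of Lemma B.7). -/
theorem upwind_dissipativity_identity
    (Nx Ny Nq : ℕ) [NeZero Nx] [NeZero Ny]
    (Δx Δy : ℝ) (hΔx : 0 < Δx) (hΔy : 0 < Δy)
    (w Ω : Fin Nq → ℝ) (hw : ∀ ℓ, 0 ≤ w ℓ)
    (φ : ZMod Nx × ZMod Ny → Fin Nq → ℝ) :
    (∑ p : ZMod Nx × ZMod Ny, ∑ ℓ : Fin Nq,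
        w ℓ * φ p ℓ *
          ((Ω ℓ - |Ω ℓ|) / 2 * ((φ (p.1 + 1, p.2) ℓ - φ p ℓ) / Δx)
           + (Ω ℓ + |Ω ℓ|) / 2 * ((φ p ℓ - φ (p.1 - 1, p.2) ℓ) / Δx))
          * (Δx * Δy))
    = (Δx / 2) * ∑ p : ZMod Nx × ZMod Ny, ∑ ℓ : Fin Nq,
        w ℓ * |Ω ℓ| * (((φ (p.1 + 1, p.2) ℓ - φ p ℓ) / Δx)) ^ 2 * (Δx * Δy) := by
  have hx : Δx ≠ 0 := hΔx.ne'
  -- split the LHS into the forward and backward parts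
  have split :
      (∑ p : ZMod Nx × ZMod Ny, ∑ ℓ : Fin Nq,
        w ℓ * φ p ℓ *
          ((Ω ℓ - |Ω ℓ|) / 2 * ((φ (p.1 + 1, p.2) ℓ - φ p ℓ) / Δx)
           + (Ω ℓ + |Ω ℓ|) / 2 * ((φ p ℓ - φ (p.1 - 1, p.2) ℓ) / Δx))
          * (Δx * Δy))
      = (∑ p : ZMod Nx × ZMod Ny, ∑ ℓ : Fin Nq,
          w ℓ * φ p ℓ * ((Ω ℓ - |Ω ℓ|) / 2 * ((φ (p.1 + 1, p.2) ℓ - φ p ℓ) / Δx))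
            * (Δx * Δy))
        + (∑ p : ZMod Nx × ZMod Ny, ∑ ℓ : Fin Nq,
          w ℓ * φ p ℓ * ((Ω ℓ + |Ω ℓ|) / 2 * ((φ p ℓ - φ (p.1 - 1, p.2) ℓ) / Δx))
            * (Δx * Δy)) := by
    rw [← Finset.sum_add_distrib]
    refine Finset.sum_congr rfl fun p _ => ?_
    rw [← Finset.sum_add_distrib]
    refine Finset.sum_congr rfl fun ℓ _ => ?_
    ring
  -- reindex the backward part
  have reindex :
      (∑ p : ZMod Nx × ZMod Ny, ∑ ℓ : Fin Nq,
          w ℓ * φ p ℓ * ((Ω ℓ + |Ω ℓ|) / 2 * ((φ p ℓ - φ (p.1 - 1, p.2) ℓ) / Δx))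
            * (Δx * Δy))
      = (∑ p : ZMod Nx × ZMod Ny, ∑ ℓ : Fin Nq,
          w ℓ * φ (p.1 + 1, p.2) ℓ *
            ((Ω ℓ + |Ω ℓ|) / 2 * ((φ (p.1 + 1, p.2) ℓ - φ p ℓ) / Δx))
            * (Δx * Δy)) := by
    rw [← shift_sum (fun p => ∑ ℓ : Fin Nq,
          w ℓ * φ p ℓ * ((Ω ℓ + |Ω ℓ|) / 2 * ((φ p ℓ - φ (p.1 - 1, p.2) ℓ) / Δx))
            * (Δx * Δy))]
    refine Finset.sum_congr rfl fun p _ => ?_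
    simp only [add_sub_cancel_right]
  rw [split, reindex]
  simp only [← Finset.sum_add_distrib]
  rw [Finset.mul_sum]
  -- the telescoping part vanishes
  have tele :
      (∑ p : ZMod Nx × ZMod Ny, ∑ ℓ : Fin Nq,
        w ℓ * Ω ℓ * ((φ (p.1 + 1, p.2) ℓ) ^ 2 - (φ p ℓ) ^ 2) * Δy / 2) = 0 := by
    have h := shift_sum (fun p => ∑ ℓ : Fin Nq, w ℓ * Ω ℓ * (φ p ℓ) ^ 2 * Δy / 2)
    have : (∑ p : ZMod Nx × ZMod Ny, ∑ ℓ : Fin Nq,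
        w ℓ * Ω ℓ * ((φ (p.1 + 1, p.2) ℓ) ^ 2 - (φ p ℓ) ^ 2) * Δy / 2)
        = (∑ p : ZMod Nx × ZMod Ny, ∑ ℓ : Fin Nq,
            w ℓ * Ω ℓ * (φ (p.1 + 1, p.2) ℓ) ^ 2 * Δy / 2)
          - (∑ p : ZMod Nx × ZMod Ny, ∑ ℓ : Fin Nq,
            w ℓ * Ω ℓ * (φ p ℓ) ^ 2 * Δy / 2) := by
      rw [← Finset.sum_sub_distrib]
      refine Finset.sum_congr rfl fun p _ => ?_
      rw [← Finset.sum_sub_distrib]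
      refine Finset.sum_congr rfl fun ℓ _ => ?_
      ring
    rw [this, h, sub_self]
  -- combine: LHS sum = RHS sum + telescoping
  have combine :
      (∑ p : ZMod Nx × ZMod Ny, ∑ ℓ : Fin Nq,
        (w ℓ * φ p ℓ * ((Ω ℓ - |Ω ℓ|) / 2 * ((φ (p.1 + 1, p.2) ℓ - φ p ℓ) / Δx))
            * (Δx * Δy)
          + w ℓ * φ (p.1 + 1, p.2) ℓ *
            ((Ω ℓ + |Ω ℓ|) / 2 * ((φ (p.1 + 1, p.2) ℓ - φ p ℓ) / Δx))
            * (Δx * Δy)))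
      = (∑ p : ZMod Nx × ZMod Ny,
          Δx / 2 * ∑ ℓ : Fin Nq,
            w ℓ * |Ω ℓ| * (((φ (p.1 + 1, p.2) ℓ - φ p ℓ) / Δx)) ^ 2 * (Δx * Δy))
        + (∑ p : ZMod Nx × ZMod Ny, ∑ ℓ : Fin Nq,
            w ℓ * Ω ℓ * ((φ (p.1 + 1, p.2) ℓ) ^ 2 - (φ p ℓ) ^ 2) * Δy / 2) := by
    rw [← Finset.sum_add_distrib]
    refine Finset.sum_congr rfl fun p _ => ?_
    rw [Finset.mul_sum, ← Finset.sum_add_distrib]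
    refine Finset.sum_congr rfl fun ℓ _ => ?_
    field_simp
    ring
  rw [combine, tele, add_zero]
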